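/- arXiv:1803.03928 — 9 statements merged into one kernel-verified Lean document; each statement's English description precedes it below -/
import Mathlib

section
/- Let (L, |·|) be a field with an absolute value, let J be an r×r Jordan block over L with nonzero eigenvalue λ (i.e., J has λ on the diagonal, 1 on the superdiagonal, and 0 elsewhere), and let v be a nonzero vector in L^r. If there exist positive constants c₅, c₆ and an infinite set S of positive integers such that for each n ∈ S every entry of J^n · v has absolute value at most c₅·n + c₆, then |λ| ≤ 1. -/
/-- If every entry of `J^n · v` (J a Jordan block with nonzero
eigenvalue λ, v ≠ 0) is bounded by `c₅ n + c₆` for infinitely many positive `n`,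
then `|λ| ≤ 1`. -/
theorem stmt0 {L : Type*} [Field L] (abv : AbsoluteValue L ℝ) {r : ℕ} (hr : 1 ≤ r)
    (lam : L) (hlam : lam ≠ 0)
    (J : Matrix (Fin r) (Fin r) L)
    (hJ : ∀ i j : Fin r, J i j =
      if i = j then lam else if (j : ℕ) = (i : ℕ) + 1 then 1 else 0)
    (v : Fin r → L) (hv : v ≠ 0)
    (c₅ c₆ : ℝ) (hc₅ : 0 < c₅) (hc₆ : 0 < c₆)
    (S : Set ℕ) (hS : S.Infinite) (hSpos : ∀ n ∈ S, 0 < n)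
    (hbound : ∀ n ∈ S, ∀ i : Fin r, abv ((J ^ n).mulVec v i) ≤ c₅ * n + c₆) :
    abv lam ≤ 1 := by
  -- key: entries of J^n at or below the diagonal
  have key : ∀ n : ℕ, ∀ i j : Fin r, (j : ℕ) ≤ (i : ℕ) →
      (J ^ n) i j = if i = j then lam ^ n else 0 := by
    intro n
    induction n with
    | zero =>
      intro i j _
      simp [Matrix.one_apply]
    | succ n ih =>
      intro i j hji
      rw [pow_succ, Matrix.mul_apply]
      rw [Finset.sum_eq_single j]
      · rw [ih i j hji, hJ j j, if_pos rfl]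
        by_cases hij : i = j
        · rw [if_pos hij, if_pos hij, pow_succ]
        · rw [if_neg hij, if_neg hij, zero_mul]
      · intro m _ hmj
        rw [hJ m j, if_neg hmj]
        by_cases h1 : (j : ℕ) = (m : ℕ) + 1
        · -- m = j - 1 < j ≤ i, so (J^n) i m = 0
          rw [if_pos h1, mul_one]
          have hmi : (m : ℕ) ≤ (i : ℕ) := by omega
          rw [ih i m hmi, if_neg]
          intro h
          subst h
          omega
        · rw [if_neg h1, mul_zero]
      · intro h
        exact absurd (Finset.mem_univ j) h
  -- pick the largest index k with v k ≠ 0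
  have hne : ∃ i, v i ≠ 0 := by
    by_contra h
    push_neg at h
    exact hv (funext h)
  classical
  set F : Finset (Fin r) := Finset.univ.filter (fun i => v i ≠ 0) with hF
  have hFne : F.Nonempty := by
    obtain ⟨i, hi⟩ := hne
    exact ⟨i, by simp [hF, hi]⟩
  set k : Fin r := F.max' hFne with hk
  have hvk : v k ≠ 0 := by
    have := F.max'_mem hFne
    simp only [hF, Finset.mem_filter] at this
    exact this.2
  have hmax : ∀ j : Fin r, k < j → v j = 0 := by
    intro j hj
    by_contra h
    have hjF : j ∈ F := by simp [hF, h]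
    exact absurd (F.le_max' j hjF) (not_le.mpr hj)
  -- (J^n).mulVec v k = lam^n * v k
  have hentry : ∀ n : ℕ, (J ^ n).mulVec v k = lam ^ n * v k := by
    intro n
    rw [Matrix.mulVec, dotProduct]
    rw [Finset.sum_eq_single k]
    · rw [key n k k le_rfl, if_pos rfl]
    · intro j _ hjk
      rcases lt_or_gt_of_ne hjk with h | h
      · rw [key n k j (by exact_mod_cast h.le), if_neg (fun he => hjk (he.symm)), zero_mul]
      · rw [hmax j h, mul_zero]
    · intro h
      exact absurd (Finset.mem_univ k) h
  -- the bound gives (abv lam)^n * abv (v k) ≤ c₅ n + c₆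
  have hineq : ∀ n ∈ S, (abv lam) ^ n * abv (v k) ≤ c₅ * n + c₆ := by
    intro n hn
    have := hbound n hn k
    rwa [hentry n, map_mul, map_pow] at this
  by_contra hlt
  push_neg at hlt
  set a : ℝ := abv lam with ha
  have ha1 : 1 < a := hlt
  have ha0 : 0 < a := lt_trans one_pos ha1
  set ρ : ℝ := a⁻¹ with hρ
  have hρ0 : 0 ≤ ρ := le_of_lt (inv_pos.mpr ha0)
  have hρ1 : ρ < 1 := inv_lt_one_of_one_lt₀ ha1
  have hε : 0 < abv (v k) := abv.pos hvk
  -- (c₅ n + c₆) ρ^n → 0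
  have h1 : Filter.Tendsto (fun n : ℕ => (n : ℝ) * ρ ^ n) Filter.atTop (nhds 0) :=
    tendsto_self_mul_const_pow_of_lt_one hρ0 hρ1
  have h2 : Filter.Tendsto (fun n : ℕ => ρ ^ n) Filter.atTop (nhds 0) :=
    tendsto_pow_atTop_nhds_zero_of_lt_one hρ0 hρ1
  have h3 : Filter.Tendsto (fun n : ℕ => (c₅ * n + c₆) * ρ ^ n) Filter.atTop (nhds 0) := by
    have : Filter.Tendsto (fun n : ℕ => c₅ * ((n : ℝ) * ρ ^ n) + c₆ * ρ ^ n)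
        Filter.atTop (nhds (c₅ * 0 + c₆ * 0)) :=
      ((h1.const_mul c₅).add (h2.const_mul c₆))
    simpa [mul_assoc, add_mul] using this
  have h4 := (h3.eventually (eventually_lt_nhds hε)).exists_forall_of_atTop
  obtain ⟨N, hN⟩ := h4
  obtain ⟨n, hnS, hn⟩ := hS.exists_gt N
  have h5 : (c₅ * n + c₆) * ρ ^ n < abv (v k) := hN n hn.le
  have hpow : 0 < a ^ n := pow_pos ha0 n
  have hρa : ρ ^ n * a ^ n = 1 := by
    rw [hρ, ← mul_pow, inv_mul_cancel₀ (ne_of_gt ha0), one_pow]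
  have h6 : (c₅ * n + c₆) < abv (v k) * a ^ n := by
    have := mul_lt_mul_of_pos_right h5 hpow
    rwa [mul_assoc, hρa, mul_one] at this
  have h7 := hineq n hnS
  nlinarith [h7, h6]
end

section
/- Let A be an ℓ×ℓ matrix with integer entries and nonzero determinant, and let p be a nonzero column vector with integer entries. If there exist positive real numbers c₁, c₂ and an infinite set S of positive integers such that for each n ∈ S every entry of A^n · p has absolute value at most c₁·n + c₂, then A has an eigenvalue (over the complex numbers, or an algebraic closure of ℚ) which is a root of unity. -/
open Polynomial IntermediateField Matrix
set_option maxHeartbeats 1000000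

private lemma multiset_prod_le_one {s : Multiset ℝ} (h : ∀ x ∈ s, 0 ≤ x ∧ x ≤ 1) :
    s.prod ≤ 1 := by
  induction s using Multiset.induction with
  | empty => simp
  | cons a s ih =>
    rw [Multiset.prod_cons]
    have ha := h a (Multiset.mem_cons_self a s)
    have hs : s.prod ≤ 1 := ih fun x hx => h x (Multiset.mem_cons_of_mem hx)
    have hs0 : 0 ≤ s.prod := Multiset.prod_nonneg fun x hx => (h x (Multiset.mem_cons_of_mem hx)).1
    calc a * s.prod ≤ 1 * 1 := mul_le_mul ha.2 hs hs0 zero_le_one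
    _ = 1 := mul_one 1

lemma kronecker_aux (μ : ℂ) (hμ0 : μ ≠ 0) (hint : IsIntegral ℤ μ)
    (hroots : ∀ ρ : ℂ, ((minpoly ℚ μ).map (algebraMap ℚ ℂ)).IsRoot ρ → ‖ρ‖ ≤ 1) :
    ∃ m : ℕ, 0 < m ∧ μ ^ m = 1 := by
  have hQint : IsIntegral ℚ μ := hint.tower_top
  set M : ℂ[X] := (minpoly ℚ μ).map (algebraMap ℚ ℂ) with hMdef
  have hMmonic : M.Monic := (minpoly.monic hQint).map _
  have hM0 : M ≠ 0 := hMmonic.ne_zero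
  have hmap : minpoly ℚ μ = (minpoly ℤ μ).map (algebraMap ℤ ℚ) :=
    minpoly.isIntegrallyClosed_eq_field_fractions' ℚ hint
  have hc0 : (1:ℝ) ≤ ‖M.coeff 0‖ := by
    have h0q : (minpoly ℚ μ).coeff 0 ≠ 0 := minpoly.coeff_zero_ne_zero hQint hμ0
    have h0 : (minpoly ℤ μ).coeff 0 ≠ 0 := by
      intro h
      apply h0q
      rw [hmap, coeff_map, h, map_zero]
    rw [hMdef, coeff_map, hmap, coeff_map]
    have : ((algebraMap ℚ ℂ) ((algebraMap ℤ ℚ) ((minpoly ℤ μ).coeff 0))) =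
        (((minpoly ℤ μ).coeff 0 : ℤ) : ℂ) := by
      simp only [eq_intCast, eq_ratCast, Rat.cast_intCast]
    rw [this]
    rw [Complex.norm_intCast]
    exact_mod_cast Int.one_le_abs h0
  have hprod : M.coeff 0 = (-1) ^ M.natDegree * M.roots.prod :=
    (IsAlgClosed.splits M).coeff_zero_eq_prod_roots_of_monic hMmonic
  have hnorm1 : ∀ ρ ∈ M.roots, ‖ρ‖ = 1 := by
    intro ρ hρ
    have hle : ‖ρ‖ ≤ 1 := hroots ρ (isRoot_of_mem_roots hρ)
    have hprodnorm : (1:ℝ) ≤ (M.roots.map norm).prod := by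
      have heq : (M.roots.map norm).prod = ‖M.roots.prod‖ :=
        Multiset.prod_hom M.roots ((normHom : ℂ →*₀ ℝ).toMonoidHom)
      rw [heq]
      calc (1:ℝ) ≤ ‖M.coeff 0‖ := hc0
      _ = ‖M.roots.prod‖ := by rw [hprod, norm_mul, norm_pow, norm_neg, norm_one, one_pow, one_mul]
    have herase : ‖ρ‖ * ((M.roots.erase ρ).map norm).prod = (M.roots.map norm).prod :=
      Multiset.prod_map_erase (f := norm) hρ
    have hrest : ((M.roots.erase ρ).map norm).prod ≤ 1 := by
      apply multiset_prod_le_one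
      intro x hx
      obtain ⟨y, hy, rfl⟩ := Multiset.mem_map.1 hx
      exact ⟨norm_nonneg y, hroots y (isRoot_of_mem_roots (Multiset.mem_of_mem_erase hy))⟩
    have h1 : (1:ℝ) ≤ ‖ρ‖ := by
      by_contra hlt
      push_neg at hlt
      have : (M.roots.map norm).prod < 1 := by
        rw [← herase]
        calc ‖ρ‖ * ((M.roots.erase ρ).map norm).prod ≤ ‖ρ‖ * 1 := by
              apply mul_le_mul_of_nonneg_left hrest (norm_nonneg ρ)
        _ = ‖ρ‖ := mul_one _
        _ < 1 := hlt
      linarith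
    linarith
  -- number field part
  haveI hFD : FiniteDimensional ℚ ℚ⟮μ⟯ := IntermediateField.adjoin.finiteDimensional hQint
  haveI : NumberField ℚ⟮μ⟯ := ⟨⟩
  set x := IntermediateField.AdjoinSimple.gen ℚ μ with hxdef
  have halg : algebraMap ℚ⟮μ⟯ ℂ x = μ := IntermediateField.AdjoinSimple.algebraMap_gen ℚ μ
  have hxint : IsIntegral ℤ x := by
    rw [← isIntegral_algebraMap_iff (algebraMap ℚ⟮μ⟯ ℂ).injective, halg]; exact hint
  have hminx : minpoly ℚ x = minpoly ℚ μ := by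
    rw [← minpoly.algebraMap_eq (algebraMap ℚ⟮μ⟯ ℂ).injective x, halg]
  have hnorms : ∀ φ : ℚ⟮μ⟯ →+* ℂ, ‖φ x‖ = 1 := by
    intro φ
    have haev : aeval (φ x) (minpoly ℚ x) = 0 := by
      have h := Polynomial.aeval_algHom_apply φ.toRatAlgHom x (minpoly ℚ x)
      rw [minpoly.aeval, map_zero] at h
      exact h
    have hroot : M.IsRoot (φ x) := by
      rw [hMdef, IsRoot, eval_map, ← hminx, ← aeval_def]
      exact haev
    exact hnorm1 _ (by rw [mem_roots hM0]; exact hroot)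
  obtain ⟨m, hm, hxm⟩ := NumberField.Embeddings.pow_eq_one_of_norm_eq_one ℚ⟮μ⟯ ℂ hxint hnorms
  exact ⟨m, hm, by rw [← halg, ← map_pow, hxm, _root_.map_one]⟩

-- generic independence-buildup lemma
private lemma li_aux {K V : Type*} [Field K] [AddCommGroup V] [Module K V]
    (v : ℕ → V) : ∀ k : ℕ, (∀ j < k, v j ∉ Submodule.span K (Set.range fun i : Fin j => v ↑i)) →
    LinearIndependent K (fun j : Fin k => v ↑j) := by
  intro k
  induction k with
  | zero => intro _; exact linearIndependent_empty_type
  | succ k ih =>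
    intro h
    have heq : (fun j : Fin (k+1) => v ↑j) = Fin.snoc (fun j : Fin k => v ↑j) (v k) := by
      funext j
      refine Fin.lastCases ?_ ?_ j
      · simp [Fin.snoc_last]
      · intro i; simp [Fin.snoc_castSucc]
    rw [heq, linearIndependent_fin_snoc]
    exact ⟨ih (fun j hj => h j (Nat.lt_succ_of_lt hj)), h k (Nat.lt_succ_self k)⟩

private lemma sum_mulVec_aux {K : Type*} [CommRing K] {a b : ℕ} {ι : Type*} [Fintype ι]
    (f : ι → Matrix (Fin a) (Fin b) K) (v : Fin b → K) :
    (∑ j : ι, f j) *ᵥ v = ∑ j : ι, (f j) *ᵥ v := by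
  funext i
  simp only [Matrix.mulVec, dotProduct, Finset.sum_apply, Matrix.sum_apply,
    Finset.sum_mul]
  exact Finset.sum_comm

/-- If `A` is an integer matrix with nonzero determinant, `p ≠ 0` an
integer vector, and every entry of `A^n · p` is bounded in absolute value by
`c₁ n + c₂` for all `n` in an infinite set of positive integers, then `A` has an
eigenvalue (in `ℂ`) which is a root of unity. -/
theorem stmt1 {ℓ : ℕ} (A : Matrix (Fin ℓ) (Fin ℓ) ℤ) (hA : A.det ≠ 0)
    (p : Fin ℓ → ℤ) (hp : p ≠ 0)
    (c₁ c₂ : ℝ) (hc₁ : 0 < c₁) (hc₂ : 0 < c₂)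
    (S : Set ℕ) (hS : S.Infinite) (hSpos : ∀ n ∈ S, 0 < n)
    (hbound : ∀ n ∈ S, ∀ i : Fin ℓ, |(((A ^ n).mulVec p i : ℤ) : ℝ)| ≤ c₁ * n + c₂) :
    ∃ ζ : ℂ, (A.map (Int.cast : ℤ → ℂ)).charpoly.IsRoot ζ ∧ ∃ m : ℕ, 0 < m ∧ ζ ^ m = 1 := by
  classical
  set AQ : Matrix (Fin ℓ) (Fin ℓ) ℚ := A.map (Int.cast : ℤ → ℚ) with hAQ
  set pQ : Fin ℓ → ℚ := fun i => (p i : ℚ) with hpQ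
  set q : ℕ → Fin ℓ → ℚ := fun k => (AQ ^ k) *ᵥ pQ with hqdef
  have hpow : ∀ k, AQ ^ k = (A ^ k).map (Int.cast : ℤ → ℚ) := by
    intro k
    have := (map_pow ((Int.castRingHom ℚ).mapMatrix) A k).symm
    simpa using this
  have hqint : ∀ k i, q k i = (((A ^ k).mulVec p i : ℤ) : ℚ) := by
    intro k i
    rw [hqdef]
    simp only [hpow k]
    simp [Matrix.mulVec, dotProduct, hpQ, Matrix.map_apply]
  -- existence of a linear dependence
  have hex : ∃ k : ℕ, q k ∈ Submodule.span ℚ (Set.range fun j : Fin k => q ↑j) := by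
    by_contra hcon
    push_neg at hcon
    have hli : LinearIndependent ℚ (fun j : Fin (ℓ+1) => q ↑j) :=
      li_aux q (ℓ+1) (fun j _ => hcon j)
    have hcard := hli.fintype_card_le_finrank
    simp [Module.finrank_fintype_fun_eq_card] at hcard
  set d : ℕ := Nat.find hex with hddef
  have hdmem : q d ∈ Submodule.span ℚ (Set.range fun j : Fin d => q ↑j) := Nat.find_spec hex
  have hind : LinearIndependent ℚ (fun j : Fin d => q ↑j) :=
    li_aux q d (fun j hj => Nat.find_min hex hj)
  have hd1 : 1 ≤ d := by
    rcases Nat.eq_zero_or_pos d with h0 | h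
    · exfalso
      rw [h0] at hdmem
      have : q 0 = 0 := by
        simpa [Submodule.span_eq_bot] using hdmem
      apply hp
      funext i
      have := congrFun this i
      rw [hqint 0 i] at this
      simpa using this
    · exact h
  obtain ⟨c, hc⟩ := (Submodule.mem_span_range_iff_exists_fun ℚ).1 hdmem
  -- recurrence
  have hrec : ∀ m : ℕ, q (m + d) = ∑ j : Fin d, c j • q (m + ↑j) := by
    intro m
    have h1 : q (m + d) = (AQ ^ m) *ᵥ q d := by
      rw [hqdef]
      simp only []
      rw [pow_add, ← Matrix.mulVec_mulVec]
    rw [h1, ← hc]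
    have h2 : (AQ ^ m) *ᵥ (∑ i : Fin d, c i • q ↑i) = ∑ i : Fin d, c i • ((AQ ^ m) *ᵥ q ↑i) := by
      rw [← Matrix.mulVecLin_apply, map_sum]
      simp [Matrix.mulVecLin_apply, Matrix.mulVec_smul]
    rw [h2]
    refine Finset.sum_congr rfl fun j _ => ?_
    congr 1
    rw [hqdef]
    simp only []
    rw [pow_add, ← Matrix.mulVec_mulVec]
  -- step (c): roots of the relation have norm ≤ 1
  have hstepc : ∀ μ : ℂ, (μ ^ d = ∑ j : Fin d, (c j : ℂ) * μ ^ (j : ℕ)) → ‖μ‖ ≤ 1 := by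
    intro μ hμrel
    by_contra hgt
    push_neg at hgt
    let T : (Fin d → ℚ) →ₗ[ℚ] (Fin ℓ → ℚ) :=
      { toFun := fun x => ∑ j : Fin d, x j • q ↑j
        map_add' := by
          intro a b
          simp only [Pi.add_apply, add_smul]
          rw [Finset.sum_add_distrib]
        map_smul' := by
          intro r a
          simp only [Pi.smul_apply, smul_eq_mul, RingHom.id_apply, Finset.smul_sum, smul_smul] }
    have hTker : LinearMap.ker T = ⊥ := by
      rw [LinearMap.ker_eq_bot']
      intro x hx
      exact funext (Fintype.linearIndependent_iff.1 hind x hx)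
    obtain ⟨r', hr'⟩ := T.exists_leftInverse_of_injective hTker
    have hTsingle : ∀ k : Fin d, T (Pi.single k 1) = q ↑k := by
      intro k
      show (∑ j : Fin d, (Pi.single k (1:ℚ) : Fin d → ℚ) j • q ↑j) = q ↑k
      rw [Finset.sum_eq_single k]
      · simp
      · intro b _ hb
        simp [Pi.single_apply, if_neg hb]
      · intro h
        exact absurd (Finset.mem_univ k) h
    have hψ : ∀ k : Fin d, r' (q ↑k) = Pi.single k 1 := by
      intro k
      rw [← hTsingle k]
      exact LinearMap.congr_fun hr' _
    have hcoord : ∀ (v : Fin ℓ → ℚ) (j : Fin d),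
        r' v j = ∑ i : Fin ℓ, v i * r' (Pi.single i 1) j := by
      intro v j
      have hv : v = ∑ i : Fin ℓ, v i • (Pi.single i (1:ℚ) : Fin ℓ → ℚ) := by
        funext k
        simp [Finset.sum_apply, Pi.single_apply]
      conv_lhs => rw [hv]
      rw [map_sum]
      simp [Finset.sum_apply]
    let cc : Fin ℓ → ℂ := fun i => ∑ j : Fin d, ((r' (Pi.single i 1)) j : ℂ) * μ ^ (j : ℕ)
    let φ : (Fin ℓ → ℂ) →ₗ[ℂ] ℂ := ∑ i : Fin ℓ, cc i • LinearMap.proj i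
    have hφapply : ∀ x : Fin ℓ → ℂ, φ x = ∑ i : Fin ℓ, cc i * x i := by
      intro x
      simp [φ, LinearMap.sum_apply, LinearMap.smul_apply, LinearMap.proj_apply, smul_eq_mul]
    have hφcast : ∀ v : Fin ℓ → ℚ,
        φ (fun i => (v i : ℂ)) = ∑ j : Fin d, ((r' v) j : ℂ) * μ ^ (j : ℕ) := by
      intro v
      rw [hφapply]
      have h1 : ∀ i : Fin ℓ, cc i * (v i : ℂ)
          = ∑ j : Fin d, (v i : ℂ) * ((r' (Pi.single i 1)) j : ℂ) * μ ^ (j : ℕ) := by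
        intro i
        show (∑ j : Fin d, ((r' (Pi.single i 1)) j : ℂ) * μ ^ (j : ℕ)) * (v i : ℂ) = _
        rw [Finset.sum_mul]
        refine Finset.sum_congr rfl fun j _ => by ring
      rw [Finset.sum_congr rfl fun i _ => h1 i, Finset.sum_comm]
      refine Finset.sum_congr rfl fun j _ => ?_
      rw [hcoord v j]
      push_cast
      rw [Finset.sum_mul]
    have hφq : ∀ k : Fin d, φ (fun i => (q ↑k i : ℂ)) = μ ^ (k : ℕ) := by
      intro k
      rw [hφcast, ]
      rw [hψ k]
      rw [Finset.sum_eq_single k]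
      · simp
      · intro b _ hb
        simp [Pi.single_apply, if_neg hb]
      · intro h
        exact absurd (Finset.mem_univ k) h
    have hφall : ∀ n : ℕ, φ (fun i => (q n i : ℂ)) = μ ^ n := by
      intro n
      induction n using Nat.strong_induction_on with
      | _ n ih =>
        by_cases hn : n < d
        · exact hφq ⟨n, hn⟩
        · push_neg at hn
          obtain ⟨m, rfl⟩ : ∃ m, n = m + d := ⟨n - d, by omega⟩
          have hQrec : (fun i => (q (m + d) i : ℂ))
              = ∑ j : Fin d, (c j : ℂ) • (fun i => (q (m + ↑j) i : ℂ)) := by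
            funext i
            rw [congrFun (hrec m) i]
            simp only [Finset.sum_apply, Pi.smul_apply, smul_eq_mul]
            push_cast
            rfl
          rw [hQrec, _root_.map_sum]
          simp only [_root_.map_smul, smul_eq_mul]
          rw [Finset.sum_congr rfl (fun j _ => by
            rw [ih (m + ↑j) (by omega)])]
          calc ∑ j : Fin d, (c j : ℂ) * μ ^ (m + (j : ℕ))
              = μ ^ m * ∑ j : Fin d, (c j : ℂ) * μ ^ (j : ℕ) := by
                rw [Finset.mul_sum]
                refine Finset.sum_congr rfl fun j _ => ?_
                rw [pow_add]
                ring
          _ = μ ^ m * μ ^ d := by rw [hμrel]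
          _ = μ ^ (m + d) := (pow_add μ m d).symm
    set D : ℝ := ∑ i : Fin ℓ, ‖cc i‖ with hD
    have hDpos : 0 ≤ D := Finset.sum_nonneg fun i _ => norm_nonneg _
    have hb : ∀ n ∈ S, ‖μ‖ ^ n ≤ D * (c₁ * n + c₂) := by
      intro n hn
      have h1 : ‖μ‖ ^ n = ‖φ (fun i => (q n i : ℂ))‖ := by rw [hφall n, norm_pow]
      rw [h1, hφapply]
      calc ‖∑ i : Fin ℓ, cc i * (q n i : ℂ)‖ ≤ ∑ i : Fin ℓ, ‖cc i * (q n i : ℂ)‖ :=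
            norm_sum_le _ _
      _ = ∑ i : Fin ℓ, ‖cc i‖ * ‖(q n i : ℂ)‖ := by simp [norm_mul]
      _ ≤ ∑ i : Fin ℓ, ‖cc i‖ * (c₁ * n + c₂) := by
          refine Finset.sum_le_sum fun i _ => ?_
          refine mul_le_mul_of_nonneg_left ?_ (norm_nonneg _)
          rw [hqint n i]
          have h2 : ((((A ^ n).mulVec p i : ℤ) : ℚ) : ℂ) = (((A ^ n).mulVec p i : ℤ) : ℂ) := by
            push_cast
            rfl
          rw [h2, Complex.norm_intCast]
          exact hbound n hn i
      _ = D * (c₁ * n + c₂) := by rw [hD, Finset.sum_mul]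
    set s : ℝ := Real.sqrt ‖μ‖ with hs
    have hs1 : 1 < s := by
      rw [hs, show (1:ℝ) = Real.sqrt 1 by simp]
      exact Real.sqrt_lt_sqrt (by norm_num) hgt
    have hss : s * s = ‖μ‖ := Real.mul_self_sqrt (norm_nonneg μ)
    obtain ⟨N, hN⟩ := exists_nat_gt ((D * c₁ + D * c₂) / ((s - 1) ^ 2))
    obtain ⟨n, hnS, hn⟩ := hS.exists_gt (max N 1)
    have hn1 : (1:ℝ) ≤ (n:ℝ) := by
      exact_mod_cast le_trans (le_max_right N 1) hn.le
    have hnN : (N:ℝ) ≤ (n:ℝ) := by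
      exact_mod_cast le_trans (le_max_left N 1) hn.le
    have hsn : (n:ℝ) * (s - 1) ≤ s ^ n := by
      have h3 := one_add_mul_le_pow (by linarith : (-2:ℝ) ≤ s - 1) n
      calc (n:ℝ) * (s - 1) ≤ 1 + n * (s - 1) := by linarith
      _ ≤ (1 + (s - 1)) ^ n := h3
      _ = s ^ n := by ring_nf
    have hsn0 : 0 ≤ (n:ℝ) * (s - 1) := by nlinarith
    have hpow2 : ((n:ℝ) * (s - 1)) ^ 2 ≤ ‖μ‖ ^ n := by
      calc ((n:ℝ) * (s - 1)) ^ 2 ≤ (s ^ n) ^ 2 := by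
            exact pow_le_pow_left₀ hsn0 hsn 2
      _ = (s * s) ^ n := by ring
      _ = ‖μ‖ ^ n := by rw [hss]
    have h7 : (0:ℝ) < (s - 1) ^ 2 := by
      have : (0:ℝ) < s - 1 := by linarith
      positivity
    have h5 : D * c₁ + D * c₂ < (n:ℝ) * (s - 1) ^ 2 := by
      have h6 : (D * c₁ + D * c₂) / ((s - 1) ^ 2) < (n:ℝ) := lt_of_lt_of_le hN hnN
      calc D * c₁ + D * c₂ = ((D * c₁ + D * c₂) / ((s - 1) ^ 2)) * ((s - 1) ^ 2) :=
            (div_mul_cancel₀ _ (ne_of_gt h7)).symm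
      _ < (n:ℝ) * (s - 1) ^ 2 := mul_lt_mul_of_pos_right h6 h7
    have hfinal : D * (c₁ * n + c₂) < ((n:ℝ) * (s - 1)) ^ 2 := by
      have h8 : D * (c₁ * n + c₂) ≤ (D * c₁ + D * c₂) * n := by
        have h81 : 0 ≤ D * c₂ * ((n:ℝ) - 1) :=
          mul_nonneg (mul_nonneg hDpos hc₂.le) (by linarith)
        nlinarith [h81]
      calc D * (c₁ * n + c₂) ≤ (D * c₁ + D * c₂) * n := h8
      _ < ((n:ℝ) * (s - 1) ^ 2) * n := mul_lt_mul_of_pos_right h5 (by linarith)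
      _ = ((n:ℝ) * (s - 1)) ^ 2 := by ring
    have h9 := hb n hnS
    linarith
  -- the polynomial g
  set g : ℚ[X] := X ^ d - ∑ j : Fin d, C (c j) * X ^ (j : ℕ) with hgdef
  have hsumdeg : (∑ j : Fin d, C (c j) * X ^ (j : ℕ) : ℚ[X]).degree < (d : ℕ) :=
    degree_sum_fin_lt c
  have hgmonic : g.Monic := monic_X_pow_sub (by exact_mod_cast hsumdeg)
  have hgdeg : g.natDegree = d := by
    have hdeg : g.degree = d := by
      rw [hgdef]
      rw [degree_sub_eq_left_of_degree_lt]
      · exact degree_X_pow d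
      · rw [degree_X_pow]
        exact hsumdeg
    exact natDegree_eq_of_degree_eq_some hdeg
  have hgA : (aeval AQ g) *ᵥ pQ = 0 := by
    have h3 : aeval AQ g = AQ ^ d - ∑ j : Fin d, c j • AQ ^ (j : ℕ) := by
      rw [hgdef]
      rw [_root_.map_sub, _root_.map_pow, aeval_X, _root_.map_sum]
      congr 1
      refine Finset.sum_congr rfl fun j _ => ?_
      rw [_root_.map_mul, aeval_C, _root_.map_pow, aeval_X, Algebra.smul_def]
    rw [h3, Matrix.sub_mulVec]
    have h4 : (∑ j : Fin d, c j • AQ ^ (j : ℕ)) *ᵥ pQ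
        = ∑ j : Fin d, c j • (AQ ^ (j : ℕ) *ᵥ pQ) := by
      rw [sum_mulVec_aux]
      refine Finset.sum_congr rfl fun j _ => ?_
      rw [Matrix.smul_mulVec]
    rw [h4, sub_eq_zero]
    exact hc.symm
  have hdvd : g ∣ AQ.charpoly := by
    rw [← modByMonic_eq_zero_iff_dvd hgmonic]
    set r : ℚ[X] := AQ.charpoly %ₘ g with hrdef
    have hkill : (aeval AQ r) *ᵥ pQ = 0 := by
      have hch : AQ.charpoly = r + g * (AQ.charpoly /ₘ g) :=
        (modByMonic_add_div _ g).symm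
      have h0 : (aeval AQ AQ.charpoly) *ᵥ pQ = 0 := by
        rw [Matrix.aeval_self_charpoly]
        exact Matrix.zero_mulVec _
      have h1 : (aeval AQ (g * (AQ.charpoly /ₘ g))) *ᵥ pQ = 0 := by
        rw [mul_comm, _root_.map_mul, ← Matrix.mulVec_mulVec, hgA, Matrix.mulVec_zero]
      rw [hch, _root_.map_add, Matrix.add_mulVec, h1, add_zero] at h0
      exact h0
    have hrdeg : r.natDegree < d := by
      rcases eq_or_ne r 0 with h | h
      · rw [h]
        simpa using Nat.pos_of_ne_zero (by omega : d ≠ 0)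
      · have h2 := degree_modByMonic_lt AQ.charpoly hgmonic
        rw [← hgdeg]
        exact natDegree_lt_natDegree h h2
    have hexp : r = ∑ j ∈ Finset.range d, monomial j (r.coeff j) := as_sum_range' r d hrdeg
    have hkill2 : ∑ j : Fin d, r.coeff ↑j • q ↑j = 0 := by
      have h5 : (aeval AQ r) *ᵥ pQ = ∑ j : Fin d, r.coeff ↑j • q ↑j := by
        conv_lhs => rw [hexp]
        have h6 : aeval AQ (∑ j ∈ Finset.range d, monomial j (r.coeff j))
            = ∑ j : Fin d, r.coeff ↑j • AQ ^ (j : ℕ) := by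
          rw [_root_.map_sum, ← Fin.sum_univ_eq_sum_range (fun j => aeval AQ (monomial j (r.coeff j))) d]
          refine Finset.sum_congr rfl fun j _ => ?_
          rw [aeval_monomial, Algebra.smul_def]
        rw [h6, sum_mulVec_aux]
        refine Finset.sum_congr rfl fun j _ => ?_
        rw [Matrix.smul_mulVec]
      rw [← h5, hkill]
    have hcoeff : ∀ j : Fin d, r.coeff ↑j = 0 :=
      Fintype.linearIndependent_iff.1 hind _ hkill2
    rw [hexp]
    apply Finset.sum_eq_zero
    intro j hj
    rw [show r.coeff j = 0 from hcoeff ⟨j, Finset.mem_range.1 hj⟩, monomial_zero_right]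
  -- pick a root μ of g over ℂ
  have hgC : (g.map (algebraMap ℚ ℂ)).natDegree = d := by
    rw [natDegree_map]; exact hgdeg
  have hroot : ∃ μ : ℂ, (g.map (algebraMap ℚ ℂ)).IsRoot μ := by
    apply Complex.exists_root
    rw [degree_eq_natDegree (by intro h; rw [h] at hgC; simp at hgC; omega)]
    exact_mod_cast by omega
  obtain ⟨μ, hμ⟩ := hroot
  -- relation for roots of g
  have hmapg : g.map (algebraMap ℚ ℂ) = X ^ d - ∑ j : Fin d, C ((c j : ℂ)) * X ^ (j : ℕ) := by
    rw [hgdef]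
    rw [Polynomial.map_sub, Polynomial.map_pow, map_X, Polynomial.map_sum]
    congr 1
    refine Finset.sum_congr rfl fun j _ => ?_
    rw [Polynomial.map_mul, map_C, Polynomial.map_pow, map_X]
    try norm_cast
  have hrel : ∀ ρ : ℂ, (g.map (algebraMap ℚ ℂ)).IsRoot ρ →
      ρ ^ d = ∑ j : Fin d, (c j : ℂ) * ρ ^ (j : ℕ) := by
    intro ρ hρ
    have h1 := hρ
    rw [IsRoot, hmapg, eval_sub, eval_pow, eval_X, eval_finset_sum] at h1
    simp only [eval_mul, eval_C, eval_pow, eval_X] at h1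
    linear_combination h1
  -- μ is a root of the charpoly over ℂ
  have hcharC : (A.map (Int.cast : ℤ → ℂ)).charpoly = (AQ.charpoly).map (algebraMap ℚ ℂ) := by
    have h1 : A.map (Int.cast : ℤ → ℂ) = AQ.map (algebraMap ℚ ℂ) := by
      have h2 : (algebraMap ℚ ℂ) ∘ (Int.cast : ℤ → ℚ) = (Int.cast : ℤ → ℂ) := by
        funext x
        simp
      rw [hAQ, Matrix.map_map, h2]
    rw [h1, Matrix.charpoly_map]
  have hμchar : (A.map (Int.cast : ℤ → ℂ)).charpoly.IsRoot μ := by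
    rw [hcharC]
    have : g.map (algebraMap ℚ ℂ) ∣ AQ.charpoly.map (algebraMap ℚ ℂ) :=
      Polynomial.map_dvd _ hdvd
    exact hμ.dvd this
  have hcharZC : (A.charpoly).map (Int.castRingHom ℂ) = (A.map (Int.cast : ℤ → ℂ)).charpoly := by
    rw [← Matrix.charpoly_map]
    rfl
  have hμint : IsIntegral ℤ μ := by
    refine ⟨A.charpoly, A.charpoly_monic, ?_⟩
    have h2 : Polynomial.eval₂ (Int.castRingHom ℂ) μ A.charpoly = 0 := by
      rw [eval₂_eq_eval_map, hcharZC]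
      exact hμchar
    exact h2
  have hμ0 : μ ≠ 0 := by
    intro h0
    have hev := hμchar
    rw [h0, IsRoot, ← coeff_zero_eq_eval_zero] at hev
    have hdet := Matrix.det_eq_sign_charpoly_coeff (A.map (Int.cast : ℤ → ℂ))
    rw [hev, mul_zero] at hdet
    have hdet2 : ((A.det : ℤ) : ℂ) = 0 := by
      have h3 := RingHom.map_det (Int.castRingHom ℂ) A
      rw [RingHom.mapMatrix_apply] at h3
      exact h3.trans hdet
    exact hA (by exact_mod_cast hdet2)
  have hconj : ∀ ρ : ℂ, ((minpoly ℚ μ).map (algebraMap ℚ ℂ)).IsRoot ρ → ‖ρ‖ ≤ 1 := by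
    intro ρ hρ
    have hdvd2 : minpoly ℚ μ ∣ g := by
      apply minpoly.dvd
      rw [aeval_def, ← eval_map]
      exact hμ
    exact hstepc ρ (hrel ρ (hρ.dvd (Polynomial.map_dvd _ hdvd2)))
  obtain ⟨m, hm, hμm⟩ := kronecker_aux μ hμ0 hμint hconj
  exact ⟨μ, hμchar, m, hm, hμm⟩
end

section
/- Let λ₁, …, λ_k be multiplicatively independent nonzero elements of an algebraically closed field 𝕜 of characteristic 0. If F ∈ 𝕜[x₁, …, x_k] is a polynomial such that F(λ₁^n, …, λ_k^n) = 0 for all n ∈ ℕ, then F = 0. -/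
open Finset

/-- If `v : Fin m → 𝕜` is injective and `∑ i, c i * v i ^ n = 0` for all `n`,
then `c = 0`. -/
lemma aux_vandermonde {𝕜 : Type*} [Field 𝕜] {m : ℕ} (v : Fin m → 𝕜)
    (hv : Function.Injective v) (c : Fin m → 𝕜)
    (h : ∀ n : ℕ, ∑ i, c i * v i ^ n = 0) : c = 0 := by
  set A : Matrix (Fin m) (Fin m) 𝕜 := (Matrix.vandermonde v).transpose with hA
  have hdet : IsUnit A.det := by
    rw [Matrix.det_transpose]
    exact (Matrix.det_vandermonde_ne_zero_iff.mpr hv).isUnit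
  have hinj : Function.Injective A.mulVec :=
    Matrix.mulVec_injective_iff_isUnit.mpr ((Matrix.isUnit_iff_isUnit_det A).mpr hdet)
  have hzero : A.mulVec c = A.mulVec 0 := by
    rw [Matrix.mulVec_zero]
    funext n
    simpa [hA, Matrix.mulVec, dotProduct, Matrix.vandermonde, mul_comm]
      using h (n : ℕ)
  exact hinj hzero

/-- if `λ₁, …, λ_k` are multiplicatively independent nonzero elements
of an algebraically closed field of characteristic 0 and a polynomial `F` vanishes
at `(λ₁^n, …, λ_k^n)` for all `n`, then `F = 0`. -/
theorem stmt3 {𝕜 : Type*} [Field 𝕜] [IsAlgClosed 𝕜] [CharZero 𝕜] {k : ℕ}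
    (lam : Fin k → 𝕜) (h0 : ∀ i, lam i ≠ 0)
    (hindep : ∀ c : Fin k → ℤ, ∏ i, lam i ^ c i = 1 → c = 0)
    (F : MvPolynomial (Fin k) 𝕜)
    (hF : ∀ n : ℕ, MvPolynomial.eval (fun i => lam i ^ n) F = 0) :
    F = 0 := by
  set S := F.support with hS
  set e : Fin S.card ≃ {x // x ∈ S} := S.equivFin.symm with he
  set v : Fin S.card → 𝕜 := fun i => ∏ j, lam j ^ ((e i : Fin k →₀ ℕ) j) with hv
  set c : Fin S.card → 𝕜 := fun i => F.coeff (e i) with hc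
  -- μ values are distinct
  have hvinj : Function.Injective v := by
    intro i i' hii
    have key : ∀ j, ((((e i : Fin k →₀ ℕ) j : ℤ)) - ((e i' : Fin k →₀ ℕ) j : ℤ)) = 0 := by
      have h1 : ∏ j, lam j ^ ((((e i : Fin k →₀ ℕ) j : ℤ)) - ((e i' : Fin k →₀ ℕ) j : ℤ)) = 1 := by
        have : ∀ j, lam j ^ ((((e i : Fin k →₀ ℕ) j : ℤ)) - ((e i' : Fin k →₀ ℕ) j : ℤ))
            = lam j ^ ((e i : Fin k →₀ ℕ) j) / lam j ^ ((e i' : Fin k →₀ ℕ) j) := by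
          intro j
          rw [zpow_sub₀ (h0 j), zpow_natCast, zpow_natCast]
        rw [Finset.prod_congr rfl (fun j _ => this j), Finset.prod_div_distrib,
          div_eq_one_iff_eq
            (Finset.prod_ne_zero_iff.mpr fun j _ => pow_ne_zero _ (h0 j))]
        exact hii
      have := hindep _ h1
      intro j; exact congrFun this j
    have hdd : (e i : Fin k →₀ ℕ) = (e i' : Fin k →₀ ℕ) := by
      ext j
      exact_mod_cast sub_eq_zero.mp (key j)
    exact e.injective (Subtype.ext hdd)
  -- the evaluation identity
  have hsum : ∀ n : ℕ, ∑ i, c i * v i ^ n = 0 := by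
    intro n
    have := hF n
    rw [MvPolynomial.eval_eq'] at this
    calc ∑ i, c i * v i ^ n
        = ∑ x : {x // x ∈ S}, F.coeff (x : Fin k →₀ ℕ) * ∏ j, (lam j ^ n) ^ ((x : Fin k →₀ ℕ) j) := by
          rw [← Equiv.sum_comp e]
          refine Finset.sum_congr rfl fun i _ => ?_
          simp only [hc, hv]
          congr 1
          rw [← Finset.prod_pow]
          refine Finset.prod_congr rfl fun j _ => ?_
          rw [← pow_mul, ← pow_mul, mul_comm]
      _ = ∑ d ∈ S, F.coeff d * ∏ j, (lam j ^ n) ^ (d j) :=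
          Finset.sum_coe_sort S (fun d => F.coeff d * ∏ j, (lam j ^ n) ^ (d j))
      _ = 0 := this
  have hczero := aux_vandermonde v hvinj c hsum
  ext d
  by_cases hd : d ∈ S
  · have := congrFun hczero (e.symm ⟨d, hd⟩)
    simpa [hc] using this
  · rw [MvPolynomial.coeff_zero]
    exact MvPolynomial.notMem_support_iff.mp hd
end

section
/- Let λ₁, …, λ_{k-1} be multiplicatively independent nonzero elements of an algebraically closed field 𝕜 of characteristic 0. If F ∈ 𝕜[x₁, …, x_k] is a polynomial such that F(n·λ₁^n, λ₁^n, λ₂^n, …, λ_{k-1}^n) = 0 for all n ∈ ℕ, then F = 0. -/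
open Polynomial


lemma evalNat_zero' {𝕜 : Type*} [Field 𝕜] [CharZero 𝕜] (p : 𝕜[X])
    (h : ∀ n : ℕ, p.eval (n:𝕜) = 0) : p = 0 :=
  p.eq_zero_of_infinite_isRoot (Set.infinite_of_injective_forall_mem
    (f := fun n : ℕ => (n:𝕜)) Nat.cast_injective (fun n => h n))

lemma comp_natDegree' {𝕜 : Type*} [Field 𝕜] (p : 𝕜[X]) :
    (p.comp (X + C 1)).natDegree = p.natDegree := by
  rw [natDegree_comp, natDegree_X_add_C, mul_one]

lemma comp_leadingCoeff' {𝕜 : Type*} [Field 𝕜] (p : 𝕜[X]) :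
    (p.comp (X + C 1)).leadingCoeff = p.leadingCoeff := by
  rw [leadingCoeff_comp (by rw [natDegree_X_add_C]; norm_num)]
  have h1 : ((X : 𝕜[X]) + 1).Monic := by simpa using monic_X_add_C (1:𝕜)
  simp [h1.leadingCoeff]

lemma key_exp_poly {𝕜 : Type*} [Field 𝕜] [CharZero 𝕜] :
    ∀ s : Finset 𝕜, (∀ μ ∈ s, μ ≠ 0) → ∀ P : 𝕜 → 𝕜[X],
      (∀ n : ℕ, ∑ μ ∈ s, (P μ).eval (n:𝕜) * μ ^ n = 0) → ∀ μ ∈ s, P μ = 0 := by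
  classical
  intro s
  induction s using Finset.strongInduction with
  | _ s ih =>
  intro hs
  rcases s.eq_empty_or_nonempty with rfl | ⟨μ₀, hμ₀⟩
  · simp
  have hμ₀ne : μ₀ ≠ 0 := hs _ hμ₀
  have base : ∀ P : 𝕜 → 𝕜[X], P μ₀ = 0 →
      (∀ n : ℕ, ∑ μ ∈ s, (P μ).eval (n:𝕜) * μ ^ n = 0) → ∀ μ ∈ s, P μ = 0 := by
    intro P h0 hP μ hμ
    rcases eq_or_ne μ μ₀ with rfl | hne
    · exact h0
    · refine ih (s.erase μ₀) (Finset.erase_ssubset hμ₀)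
        (fun ν hν => hs ν (Finset.mem_of_mem_erase hν)) P (fun n => ?_) μ
        (Finset.mem_erase.2 ⟨hne, hμ⟩)
      have h := hP n
      rwa [← Finset.add_sum_erase s _ hμ₀, h0, eval_zero, zero_mul, zero_add] at h
  suffices H : ∀ d, ∀ P : 𝕜 → 𝕜[X],
      (if P μ₀ = 0 then 0 else (P μ₀).natDegree + 1) ≤ d →
      (∀ n : ℕ, ∑ μ ∈ s, (P μ).eval (n:𝕜) * μ ^ n = 0) → ∀ μ ∈ s, P μ = 0 by
    intro P hP
    exact H _ P le_rfl hP
  intro d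
  induction d with
  | zero =>
    intro P hm hP
    have h0 : P μ₀ = 0 := by by_contra h; simp [h] at hm
    exact base P h0 hP
  | succ d ihd =>
    intro P hm hP
    by_cases h0 : P μ₀ = 0
    · exact base P h0 hP
    set P' : 𝕜 → 𝕜[X] := fun μ => C μ * (P μ).comp (X + C 1) - C μ₀ * P μ with hP'def
    have hev : ∀ (μ : 𝕜) (n : ℕ),
        (P' μ).eval (n:𝕜) = μ * (P μ).eval ((n:𝕜)+1) - μ₀ * (P μ).eval (n:𝕜) := by
      intro μ n; simp [hP'def, eval_comp]
    have hsum' : ∀ n : ℕ, ∑ μ ∈ s, (P' μ).eval (n:𝕜) * μ ^ n = 0 := by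
      intro n
      have e1 := hP (n+1)
      have e2 := hP n
      rw [show ((n+1:ℕ):𝕜) = (n:𝕜)+1 by push_cast; ring] at e1
      calc ∑ μ ∈ s, (P' μ).eval (n:𝕜) * μ ^ n
          = ∑ μ ∈ s, ((P μ).eval ((n:𝕜)+1) * μ ^ (n+1) - μ₀ * ((P μ).eval (n:𝕜) * μ ^ n)) := by
            refine Finset.sum_congr rfl fun μ hμ => ?_
            rw [hev]; ring
        _ = 0 := by
            rw [Finset.sum_sub_distrib, ← Finset.mul_sum, e1, e2, mul_zero, sub_zero]
    have hdrop : (if P' μ₀ = 0 then 0 else (P' μ₀).natDegree + 1) ≤ d := by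
      have hmd : (P μ₀).natDegree ≤ d := by simpa [h0] using hm
      have hPP' : P' μ₀ = C μ₀ * ((P μ₀).comp (X + C 1) - P μ₀) := by
        rw [hP'def]; ring
      by_cases hq : (P μ₀).comp (X + C 1) - P μ₀ = 0
      · rw [hPP', hq, mul_zero, if_pos rfl]; exact Nat.zero_le _
      · have hcompne : (P μ₀).comp (X + C 1) ≠ 0 := by
          intro hc
          apply h0
          have := comp_leadingCoeff' (P μ₀)
          rw [hc] at this
          simp only [leadingCoeff_zero] at this
          exact leadingCoeff_eq_zero.1 this.symm
        have hdeg : ((P μ₀).comp (X + C 1)).degree = (P μ₀).degree := by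
          rw [degree_eq_natDegree hcompne, degree_eq_natDegree h0, comp_natDegree']
        have hlt : ((P μ₀).comp (X + C 1) - P μ₀).degree < (P μ₀).degree := by
          have h := degree_sub_lt hdeg hcompne (comp_leadingCoeff' (P μ₀))
          rwa [hdeg] at h
        have hnd : ((P μ₀).comp (X + C 1) - P μ₀).natDegree < (P μ₀).natDegree :=
          natDegree_lt_natDegree hq hlt
        have hne' : P' μ₀ ≠ 0 := by
          rw [hPP']
          exact mul_ne_zero (by simpa using hμ₀ne) hq
        rw [if_neg hne', hPP', natDegree_C_mul hμ₀ne]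
        omega
    have hall' := ihd P' hdrop hsum'
    have hinj : ∀ μ ∈ s, μ ≠ μ₀ → P μ = 0 := by
      intro μ hμ hne
      by_contra hpne
      have h1 : (P' μ).coeff (P μ).natDegree = (μ - μ₀) * (P μ).leadingCoeff := by
        rw [hP'def]
        simp only [coeff_sub, coeff_C_mul]
        rw [show (P μ).natDegree = ((P μ).comp (X + C 1)).natDegree from (comp_natDegree' _).symm,
          coeff_natDegree, comp_natDegree', comp_leadingCoeff', coeff_natDegree]
        ring
      rw [hall' μ hμ, coeff_zero] at h1
      exact (mul_ne_zero (sub_ne_zero.2 hne) (leadingCoeff_ne_zero.2 hpne)) h1.symm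
    intro μ hμ
    rcases eq_or_ne μ μ₀ with rfl | hne
    · have hz : ∀ n : ℕ, (P μ).eval (n:𝕜) * μ ^ n = 0 := by
        intro n
        have h := hP n
        rwa [Finset.sum_eq_single μ (fun ν hν hνne => by rw [hinj ν hν hνne, eval_zero, zero_mul])
          (fun hc => absurd hμ hc)] at h
      exact absurd (evalNat_zero' _ (fun n =>
        (mul_eq_zero.1 (hz n)).resolve_right (pow_ne_zero n hμ₀ne))) h0
    · exact hinj μ hμ hne

/-- if `λ₁, …, λ_{k-1}` (here `lam : Fin (k+1) → 𝕜`, so there are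
`k+1` of them and `F` has `k+2` variables) are multiplicatively independent
nonzero elements and a polynomial `F` vanishes at
`(n·λ₁^n, λ₁^n, λ₂^n, …, λ_{k-1}^n)` for all `n`, then `F = 0`. -/
theorem stmt4 {𝕜 : Type*} [Field 𝕜] [IsAlgClosed 𝕜] [CharZero 𝕜] {k : ℕ}
    (lam : Fin (k + 1) → 𝕜) (h0 : ∀ i, lam i ≠ 0)
    (hindep : ∀ c : Fin (k + 1) → ℤ, ∏ i, lam i ^ c i = 1 → c = 0)
    (F : MvPolynomial (Fin (k + 2)) 𝕜)
    (hF : ∀ n : ℕ,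
      MvPolynomial.eval (Fin.cons ((n : 𝕜) * lam 0 ^ n) (fun i => lam i ^ n)) F = 0) :
    F = 0 := by
  classical
  set em : (Fin (k+2) →₀ ℕ) → Fin (k+1) → ℕ :=
    fun m i => m i.succ + if i = 0 then m 0 else 0 with hem
  set μf : (Fin (k+2) →₀ ℕ) → 𝕜 := fun m => ∏ i, lam i ^ em m i with hμfdef
  have hμf0 : ∀ m, μf m ≠ 0 := fun m =>
    Finset.prod_ne_zero_iff.2 fun i _ => pow_ne_zero _ (h0 i)
  -- uniqueness
  have huniq : ∀ m m' : Fin (k+2) →₀ ℕ, μf m = μf m' → m 0 = m' 0 → m = m' := by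
    intro m m' hμ h00
    have hz : ∏ i, lam i ^ ((em m i : ℤ) - (em m' i : ℤ)) = 1 := by
      rw [Finset.prod_congr rfl (fun i _ => zpow_sub₀ (h0 i) _ _), Finset.prod_div_distrib]
      have hc : ∀ m'' : Fin (k+2) →₀ ℕ,
          ∏ i, lam i ^ ((em m'' i : ℤ)) = μf m'' := by
        intro m''
        rw [hμfdef]
        exact Finset.prod_congr rfl fun i _ => zpow_natCast _ _
      rw [hc m, hc m', hμ, div_self (hμf0 m')]
    have he := hindep _ hz
    have he' : ∀ i, em m i = em m' i := by
      intro i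
      have h := congrFun he i
      simp only [Pi.zero_apply, sub_eq_zero] at h
      exact_mod_cast h
    ext j
    induction j using Fin.cases with
    | zero => exact h00
    | succ i =>
      have h := he' i
      by_cases hi : i = 0
      · subst hi
        simp [hem] at h ⊢
        omega
      · simpa [hem, hi] using h
  -- pointwise product identity
  have hpoint : ∀ (n : ℕ) (m : Fin (k+2) →₀ ℕ),
      (∏ j, (Fin.cons ((n:𝕜) * lam 0 ^ n) (fun i => lam i ^ n) : Fin (k+2) → 𝕜) j ^ m j)
        = (n:𝕜) ^ (m 0) * μf m ^ n := by
    intro n m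
    rw [Fin.prod_univ_succ]
    simp only [Fin.cons_zero, Fin.cons_succ]
    have h1 : μf m ^ n = ∏ i, lam i ^ (em m i * n) := by
      rw [hμfdef, ← Finset.prod_pow]
      exact Finset.prod_congr rfl fun i _ => (pow_mul _ _ _).symm
    have h2 : ∀ i : Fin (k+1), lam i ^ (em m i * n)
        = lam i ^ (m i.succ * n) * (if i = 0 then lam 0 ^ (m 0 * n) else 1) := by
      intro i
      by_cases hi : i = 0
      · subst hi
        simp [hem, add_mul, pow_add]
      · simp [hem, hi]
    rw [h1, Finset.prod_congr rfl (fun i _ => h2 i), Finset.prod_mul_distrib,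
      Finset.prod_ite_eq' Finset.univ (0 : Fin (k+1)) (fun i => lam 0 ^ (m 0 * n)),
      if_pos (Finset.mem_univ _)]
    have h3 : ∀ i : Fin (k+1), (lam i ^ n) ^ (m i.succ) = lam i ^ (m i.succ * n) := by
      intro i; rw [← pow_mul, mul_comm]
    rw [Finset.prod_congr rfl (fun i _ => h3 i), mul_pow, ← pow_mul]
    ring
  have hFsum : ∀ n : ℕ, ∑ m ∈ F.support, F.coeff m * ((n:𝕜)^(m 0) * μf m ^ n) = 0 := by
    intro n
    have h := hF n
    rw [MvPolynomial.eval_eq'] at h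
    rw [← h]
    exact Finset.sum_congr rfl fun m _ => congrArg (fun x => F.coeff m * x) (hpoint n m).symm
  set T := F.support.image μf with hT
  set P : 𝕜 → 𝕜[X] := fun μ =>
    ∑ m ∈ F.support.filter (fun m => μf m = μ), C (F.coeff m) * X ^ (m 0) with hPdef
  have hTsum : ∀ n : ℕ, ∑ μ ∈ T, (P μ).eval (n:𝕜) * μ ^ n = 0 := by
    intro n
    rw [← hFsum n,
      ← Finset.sum_fiberwise_of_maps_to (fun m hm => Finset.mem_image_of_mem μf hm)
        (fun m => F.coeff m * ((n:𝕜)^(m 0) * μf m ^ n))]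
    refine Finset.sum_congr rfl fun μ hμ => ?_
    rw [hPdef]
    rw [eval_finset_sum, Finset.sum_mul]
    refine Finset.sum_congr rfl fun m hm => ?_
    have hμm : μf m = μ := (Finset.mem_filter.1 hm).2
    simp only [eval_mul, eval_C, eval_pow, eval_X, ← hμm]
    ring
  have hPzero := key_exp_poly T
    (fun μ hμ => by obtain ⟨m, _, rfl⟩ := Finset.mem_image.1 hμ; exact hμf0 m) P hTsum
  apply MvPolynomial.ext
  intro m
  rw [MvPolynomial.coeff_zero]
  by_cases hm : m ∈ F.support
  swap
  · simpa [MvPolynomial.mem_support_iff] using hm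
  have h := hPzero (μf m) (Finset.mem_image_of_mem _ hm)
  have hc := congrArg (fun p => Polynomial.coeff p (m 0)) h
  simp only [hPdef, finset_sum_coeff, coeff_C_mul, coeff_X_pow, coeff_zero] at hc
  have h₀ : ∀ m' ∈ Finset.filter (fun m'' => μf m'' = μf m) F.support, m' ≠ m →
      MvPolynomial.coeff m' F * (if m 0 = m' 0 then (1:𝕜) else 0) = 0 := by
    intro m' hm' hne
    have h1 : μf m' = μf m := (Finset.mem_filter.1 hm').2
    have h2 : ¬ (m 0 = m' 0) := fun heq => hne (huniq m' m h1 heq.symm)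
    simp [h2]
  have h₁ : m ∉ Finset.filter (fun m'' => μf m'' = μf m) F.support →
      MvPolynomial.coeff m F * (if m 0 = m 0 then (1:𝕜) else 0) = 0 :=
    fun hmm => absurd (Finset.mem_filter.2 ⟨hm, (rfl : μf m = μf m)⟩) hmm
  rw [Finset.sum_eq_single m h₀ h₁] at hc
  simpa using hc
end

section
/- Let 𝕜 be a field of characteristic 0 and let λ ∈ 𝕜 be nonzero. Let J be the m×m Jordan block with eigenvalue λ, where m ≥ 3, acting on 𝕜^m by matrix multiplication. Then the rational function f(x₁, …, x_m) = 2x_{m-2}/x_m − x_{m-1}²/x_m² + x_{m-1}/(λ x_m) is non-constant and satisfies f(J·x) = f(x) as rational functions. -/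
lemma stmt6_aux {𝕜 : Type*} [Field 𝕜] {m : ℕ}
    (lam : 𝕜) (J : Matrix (Fin m) (Fin m) 𝕜)
    (hJ : ∀ i j : Fin m, J i j =
      if i = j then lam else if (j : ℕ) = (i : ℕ) + 1 then 1 else 0)
    (x : Fin m → 𝕜) (i : Fin m) :
    J.mulVec x i = lam * x i +
      (if h : (i : ℕ) + 1 < m then x ⟨(i : ℕ) + 1, h⟩ else 0) := by
  have : J.mulVec x i = ∑ j, ((if i = j then lam * x j else 0)
      + (if (j : ℕ) = (i : ℕ) + 1 then x j else 0)) := by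
    simp only [Matrix.mulVec, dotProduct, hJ]
    refine Finset.sum_congr rfl fun j _ => ?_
    by_cases h1 : i = j
    · subst h1
      simp [show ¬ ((i : ℕ) = (i : ℕ) + 1) from by omega]
    · by_cases h2 : (j : ℕ) = (i : ℕ) + 1 <;> simp [h1, h2]
  rw [this, Finset.sum_add_distrib, Finset.sum_ite_eq]
  simp only [Finset.mem_univ, if_true]
  congr 1
  by_cases h : (i : ℕ) + 1 < m
  · rw [dif_pos h, Finset.sum_eq_single (⟨(i : ℕ) + 1, h⟩ : Fin m)]
    · simp
    · intro b _ hb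
      rw [if_neg]
      intro hc
      exact hb (Fin.ext hc)
    · simp
  · rw [dif_neg h]
    apply Finset.sum_eq_zero
    intro j _
    rw [if_neg]
    omega

/-- for the `m×m` Jordan block `J` with eigenvalue `λ ≠ 0`, `m ≥ 3`,
the rational function `f(x) = 2x_{m-2}/x_m − x_{m-1}²/x_m² + x_{m-1}/(λ x_m)` is
non-constant and satisfies `f(J·x) = f(x)` (wherever defined). Coordinates are
0-indexed, so `x_m` is `x ⟨m-1⟩`, etc. -/
theorem stmt6 {𝕜 : Type*} [Field 𝕜] [CharZero 𝕜] {m : ℕ} (hm : 3 ≤ m)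
    (lam : 𝕜) (hlam : lam ≠ 0)
    (J : Matrix (Fin m) (Fin m) 𝕜)
    (hJ : ∀ i j : Fin m, J i j =
      if i = j then lam else if (j : ℕ) = (i : ℕ) + 1 then 1 else 0)
    (f : (Fin m → 𝕜) → 𝕜)
    (hf : ∀ x : Fin m → 𝕜, f x =
      2 * x ⟨m - 3, by omega⟩ / x ⟨m - 1, by omega⟩
        - (x ⟨m - 2, by omega⟩) ^ 2 / (x ⟨m - 1, by omega⟩) ^ 2
        + x ⟨m - 2, by omega⟩ / (lam * x ⟨m - 1, by omega⟩)) :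
    (∀ x : Fin m → 𝕜, x ⟨m - 1, by omega⟩ ≠ 0 → f (J.mulVec x) = f x) ∧
    ¬ ∃ a : 𝕜, ∀ x : Fin m → 𝕜, x ⟨m - 1, by omega⟩ ≠ 0 → f x = a := by
  have h3 : m - 3 < m := by omega
  have h2 : m - 2 < m := by omega
  have h1 : m - 1 < m := by omega
  set i0 : Fin m := ⟨m - 3, h3⟩
  set i1 : Fin m := ⟨m - 2, h2⟩
  set i2 : Fin m := ⟨m - 1, h1⟩
  have e0 : ∀ x : Fin m → 𝕜, J.mulVec x i0 = lam * x i0 + x i1 := by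
    intro x
    rw [stmt6_aux lam J hJ x i0]
    rw [dif_pos (show (i0 : ℕ) + 1 < m by simp [i0]; omega)]
    congr 2
    simp [i0, i1, Fin.ext_iff] <;> omega
  have e1 : ∀ x : Fin m → 𝕜, J.mulVec x i1 = lam * x i1 + x i2 := by
    intro x
    rw [stmt6_aux lam J hJ x i1]
    rw [dif_pos (show (i1 : ℕ) + 1 < m by simp [i1]; omega)]
    congr 2
    simp [i1, i2, Fin.ext_iff] <;> omega
  have e2 : ∀ x : Fin m → 𝕜, J.mulVec x i2 = lam * x i2 := by
    intro x
    rw [stmt6_aux lam J hJ x i2]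
    rw [dif_neg (show ¬ ((i2 : ℕ) + 1 < m) by simp [i2]; omega)]
    ring
  constructor
  · intro x hx
    rw [hf, hf, e0, e1, e2]
    change x i2 ≠ 0 at hx
    field_simp
    ring
  · rintro ⟨a, ha⟩
    have hne02 : i0 ≠ i2 := by simp [i0, i2, Fin.ext_iff]; omega
    have hne12 : i1 ≠ i2 := by simp [i1, i2, Fin.ext_iff]; omega
    have hne01 : i0 ≠ i1 := by simp [i0, i1, Fin.ext_iff]; omega
    set x1 : Fin m → 𝕜 := fun j => if j = i2 then 1 else 0 with hx1
    set x2 : Fin m → 𝕜 := fun j => if j = i2 then 1 else if j = i0 then 1 else 0 with hx2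
    have hv1 := ha x1 (by simp [x1])
    have hv2 := ha x2 (by simp [x2, hne02])
    rw [hf] at hv1 hv2
    simp only [x1, x2, if_pos rfl, if_neg hne02, if_neg hne12, if_neg hne01] at hv1 hv2
    simp at hv1 hv2
    rw [if_neg (Ne.symm hne01)] at hv2
    rw [← hv1] at hv2
    norm_num at hv2
end

section
/- Let 𝕜 be a field of characteristic 0, let λ₁, λ₂ ∈ 𝕜 be nonzero, and let A be the block-diagonal 4×4 matrix consisting of the two 2×2 Jordan blocks J_{λ₁,2} and J_{λ₂,2}, acting on 𝕜^4 by (x₁,x₂,x₃,x₄) ↦ (λ₁x₁+x₂, λ₁x₂, λ₂x₃+x₄, λ₂x₄). Then the rational function f(x₁,x₂,x₃,x₄) = x₁/(λ₂x₂) − x₃/(λ₁x₄) is non-constant and satisfies f(A·x) = f(x). -/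
/-- for `A = J_{λ₁,2} ⊕ J_{λ₂,2}` acting on `𝕜⁴` by
`(x₁,x₂,x₃,x₄) ↦ (λ₁x₁+x₂, λ₁x₂, λ₂x₃+x₄, λ₂x₄)`, the rational function
`f = x₁/(λ₂x₂) − x₃/(λ₁x₄)` is non-constant and `A`-invariant. -/
theorem stmt7 {𝕜 : Type*} [Field 𝕜] [CharZero 𝕜]
    (lam₁ lam₂ : 𝕜) (h₁ : lam₁ ≠ 0) (h₂ : lam₂ ≠ 0)
    (Φ : (Fin 4 → 𝕜) → (Fin 4 → 𝕜))
    (hΦ : ∀ x : Fin 4 → 𝕜,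
      Φ x = ![lam₁ * x 0 + x 1, lam₁ * x 1, lam₂ * x 2 + x 3, lam₂ * x 3])
    (f : (Fin 4 → 𝕜) → 𝕜)
    (hf : ∀ x : Fin 4 → 𝕜, f x = x 0 / (lam₂ * x 1) - x 2 / (lam₁ * x 3)) :
    (∀ x : Fin 4 → 𝕜, x 1 ≠ 0 → x 3 ≠ 0 → f (Φ x) = f x) ∧
    ¬ ∃ a : 𝕜, ∀ x : Fin 4 → 𝕜, x 1 ≠ 0 → x 3 ≠ 0 → f x = a := by
  constructor
  · intro x hx1 hx3
    rw [hf, hf, hΦ]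
    simp only [Matrix.cons_val_zero, Matrix.cons_val_one, Matrix.head_cons,
      Matrix.cons_val_two, Matrix.tail_cons, Matrix.cons_val_three]
    field_simp
    ring
  · rintro ⟨a, ha⟩
    have h0 := ha ![0, 1, 0, 1] (by norm_num) (by exact one_ne_zero)
    have h1 := ha ![lam₂, 1, 0, 1] (by norm_num) (by exact one_ne_zero)
    rw [hf] at h0 h1
    simp only [Matrix.cons_val_zero, Matrix.cons_val_one, Matrix.head_cons,
      Matrix.cons_val_two, Matrix.tail_cons, Matrix.cons_val_three] at h0 h1
    rw [mul_one, div_self h₂] at h1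
    simp at h0 h1
    rw [← h0] at h1
    exact one_ne_zero h1
end

section
/- Let 𝕜 be a field of characteristic 0 and let A be a k×k matrix over 𝕜 which is block diagonal, consisting of one 2×2 Jordan block J_{λ₁,2} and the diagonal matrix diag(λ₂,…,λ_{k-1}), with all λᵢ nonzero. If λ₁, …, λ_{k-1} are multiplicatively dependent via integers c₁,…,c_{k-1} not all zero with ∏ λᵢ^{cᵢ} = 1, then the rational function f(x₁,…,x_k) = x₂^{c₁} · ∏_{i=2}^{k-1} x_{i+1}^{cᵢ} is non-constant and satisfies f(A·x) = f(x). -/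
/-- here `k = t+2` and `lam : Fin (t+1) → 𝕜` lists `λ₁,…,λ_{k-1}`.
`A = J_{λ₁,2} ⊕ diag(λ₂,…,λ_{k-1})` acts by `(A·x)₀ = λ₁x₀+x₁`, `(A·x)₁ = λ₁x₁`,
`(A·x)ⱼ = λⱼ₋₁ xⱼ` for `j ≥ 2` (0-indexed). If `∏ λᵢ^{cᵢ} = 1` with `c ≠ 0`, then
`f(x) = ∏_{i} x_{i+1}^{cᵢ}` is non-constant and `A`-invariant. -/
theorem stmt8 {𝕜 : Type*} [Field 𝕜] [CharZero 𝕜] {t : ℕ}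
    (lam : Fin (t + 1) → 𝕜) (h0 : ∀ i, lam i ≠ 0)
    (c : Fin (t + 1) → ℤ) (hc : c ≠ 0) (hdep : ∏ i, lam i ^ c i = 1)
    (Φ : (Fin (t + 2) → 𝕜) → (Fin (t + 2) → 𝕜))
    (hΦ : ∀ (x : Fin (t + 2) → 𝕜) (j : Fin (t + 2)),
      Φ x j = if (j : ℕ) = 0 then lam 0 * x 0 + x 1
        else if (j : ℕ) = 1 then lam 0 * x 1
        else lam ⟨(j : ℕ) - 1, by have := j.isLt; omega⟩ * x j)
    (f : (Fin (t + 2) → 𝕜) → 𝕜)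
    (hf : ∀ x : Fin (t + 2) → 𝕜, f x = ∏ i : Fin (t + 1), x i.succ ^ c i) :
    (∀ x : Fin (t + 2) → 𝕜, (∀ i, x i ≠ 0) → f (Φ x) = f x) ∧
    ¬ ∃ a : 𝕜, ∀ x : Fin (t + 2) → 𝕜, (∀ i, x i ≠ 0) → f x = a := by
  constructor
  · intro x hx
    have key : ∀ i : Fin (t + 1), Φ x i.succ = lam i * x i.succ := by
      intro i
      rw [hΦ]
      have hv : (i.succ : ℕ) = (i : ℕ) + 1 := rfl
      rcases Nat.eq_zero_or_pos (i : ℕ) with h | h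
      · have hi0 : i = 0 := Fin.ext h
        subst hi0
        simp
      · have h1 : (i.succ : ℕ) ≠ 0 := by omega
        have h2 : (i.succ : ℕ) ≠ 1 := by omega
        rw [if_neg h1, if_neg h2]
        congr 2
    rw [hf, hf]
    rw [Finset.prod_congr rfl (fun i _ => by rw [key i])]
    have : ∏ i : Fin (t + 1), (lam i * x i.succ) ^ c i
        = (∏ i : Fin (t + 1), lam i ^ c i) * ∏ i : Fin (t + 1), x i.succ ^ c i := by
      rw [← Finset.prod_mul_distrib]
      exact Finset.prod_congr rfl fun i _ => mul_zpow _ _ _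
    rw [this, hdep, one_mul]
  · rintro ⟨a, ha⟩
    obtain ⟨j, hj⟩ : ∃ j, c j ≠ 0 := Function.ne_iff.mp hc
    have h1 : f (fun _ => 1) = a := ha _ (fun i => one_ne_zero)
    have h1' : f (fun _ => 1) = 1 := by
      rw [hf]; simp
    set x : Fin (t + 2) → 𝕜 := fun m => if m = j.succ then 2 else 1 with hxdef
    have hxne : ∀ i, x i ≠ 0 := by
      intro i; simp only [hxdef]; split <;> norm_num
    have h2 : f x = (2 : 𝕜) ^ c j := by
      rw [hf]
      rw [Finset.prod_eq_single j]
      · simp [hxdef]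
      · intro b _ hb
        have : x b.succ = 1 := by
          simp only [hxdef, if_neg (fun h => hb (Fin.succ_injective _ h))]
        rw [this, one_zpow]
      · simp
    have hfx : f x = a := ha x hxne
    have : (2 : 𝕜) ^ c j = 1 := by rw [← h2, hfx, ← h1, h1']
    have hq2 : (2 : ℚ) ^ c j = 1 := by
      apply Rat.cast_injective (α := 𝕜)
      push_cast
      exact this
    have : c j = 0 := by
      have := zpow_right_injective₀ (by norm_num : (0:ℚ) < 2) (by norm_num)
        (a := (2:ℚ)) (by simpa using hq2 : (fun n : ℤ => (2:ℚ) ^ n) (c j) = (fun n : ℤ => (2:ℚ) ^ n) 0)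
      exact this
    exact hj this
end

section
/- Let 𝕜 be an algebraically closed field of characteristic 0 and let A = diag(λ₁, …, λ_k) be a diagonal invertible matrix whose eigenvalues λ₁, …, λ_k are multiplicatively independent. Then the forward orbit of the point α = (1, 1, …, 1) under the map x ↦ A·x is Zariski dense in affine k-space; equivalently, no nonzero polynomial F ∈ 𝕜[x₁,…,x_k] vanishes at (λ₁^n, …, λ_k^n) for all n ∈ ℕ₀. -/
/-- if `A = diag(λ₁,…,λ_k)` has multiplicatively independent (nonzero)
eigenvalues, then the orbit of `(1,…,1)` under `x ↦ A·x` is Zariski dense in `𝔸^k`: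
no nonzero polynomial vanishes on the whole orbit. -/
theorem stmt9 {𝕜 : Type*} [Field 𝕜] [IsAlgClosed 𝕜] [CharZero 𝕜] {k : ℕ}
    (lam : Fin k → 𝕜) (h0 : ∀ i, lam i ≠ 0)
    (hindep : ∀ c : Fin k → ℤ, ∏ i, lam i ^ c i = 1 → c = 0)
    (F : MvPolynomial (Fin k) 𝕜) (hF : F ≠ 0) :
    ∃ n : ℕ, MvPolynomial.eval
      ((Matrix.diagonal lam ^ n).mulVec (fun _ => (1 : 𝕜))) F ≠ 0 := by
  classical
  by_contra hcon
  push_neg at hcon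
  -- the orbit point at time n is `fun i => lam i ^ n`
  have hvec : ∀ n : ℕ, (Matrix.diagonal lam ^ n).mulVec (fun _ => (1 : 𝕜))
      = fun i => lam i ^ n := by
    intro n
    funext i
    rw [Matrix.diagonal_pow, Matrix.mulVec_diagonal]
    simp [Pi.pow_apply]
  -- monomial values
  set μ : (Fin k →₀ ℕ) → 𝕜 := fun d => ∏ i, lam i ^ d i with hμ
  -- μ is injective (on everything), by multiplicative independence
  have hμinj : Function.Injective μ := by
    intro d e hde
    have hne : (∏ i, lam i ^ ((d i : ℤ) - (e i : ℤ))) = 1 := by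
      rw [Finset.prod_congr rfl (fun i _ => zpow_sub₀ (h0 i) _ _),
        Finset.prod_div_distrib]
      simp only [zpow_natCast]
      rw [div_eq_one_iff_eq (Finset.prod_ne_zero_iff.2 fun i _ => pow_ne_zero _ (h0 i))]
      exact hde
    have := hindep _ hne
    ext i
    have hi := congrFun this i
    simp only [Pi.zero_apply, sub_eq_zero] at hi
    exact_mod_cast hi
  -- characters
  set φ : (Fin k →₀ ℕ) → (Multiplicative ℕ →* 𝕜) := fun d => powersHom 𝕜 (μ d) with hφ
  have hφinj : Function.Injective φ := by
    intro d e hde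
    apply hμinj
    have := congrArg (fun f : Multiplicative ℕ →* 𝕜 => f (Multiplicative.ofAdd 1)) hde
    simpa [hφ, powersHom] using this
  have hli : LinearIndependent 𝕜 fun d : (Fin k →₀ ℕ) => ⇑(φ d) :=
    (linearIndependent_monoidHom (Multiplicative ℕ) 𝕜).comp φ hφinj
  -- the linear combination over the support vanishes
  have hsum : ∀ n : ℕ, ∑ d ∈ F.support, F.coeff d * (μ d) ^ n = 0 := by
    intro n
    have := hcon n
    rw [hvec n, MvPolynomial.eval_eq'] at this
    rw [← this]
    apply Finset.sum_congr rfl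
    intro d _
    congr 1
    rw [hμ]
    simp only
    rw [← Finset.prod_pow]
    apply Finset.prod_congr rfl
    intro i _
    rw [← pow_mul, ← pow_mul, mul_comm]
  have hzero : ∑ d ∈ F.support, F.coeff d • ⇑(φ d) = 0 := by
    funext m
    simp only [Finset.sum_apply, Pi.zero_apply, Pi.smul_apply, smul_eq_mul]
    have := hsum (Multiplicative.toAdd m)
    simpa [hφ, powersHom] using this
  have hall : ∀ d ∈ F.support, F.coeff d = 0 :=
    linearIndependent_iff'.mp hli F.support _ hzero
  apply hF
  ext d
  by_cases hd : d ∈ F.support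
  · simpa using hall d hd
  · simpa [MvPolynomial.mem_support_iff, not_not] using hd
end

section
/- Let 𝕜 be an algebraically closed field of characteristic 0, let Φ : 𝕜^k → 𝕜^k be an invertible linear map given by a matrix A, and suppose that A is diagonalizable with multiplicatively dependent eigenvalues. Then there is no point α ∈ 𝕜^k whose forward orbit under Φ is Zariski dense in 𝔸^k. -/
open MvPolynomial

/-- Evaluation of a `bind₁` substitution. -/
private lemma eval_bind₁' {𝕜 : Type*} [CommSemiring 𝕜] {k : ℕ}
    (g : Fin k → MvPolynomial (Fin k) 𝕜) (G : MvPolynomial (Fin k) 𝕜) (x : Fin k → 𝕜) :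
    eval x (bind₁ g G) = eval (fun i => eval x (g i)) G := by
  rw [eval, eval₂Hom_bind₁]
  rfl

/-- if `A` is invertible and diagonalizable (`A = P·diag(λ)·P⁻¹`)
with multiplicatively dependent eigenvalues, then no point has Zariski dense orbit
under `x ↦ A·x`: every orbit lies in the zero set of some nonzero polynomial. -/
theorem stmt13 {𝕜 : Type*} [Field 𝕜] [IsAlgClosed 𝕜] [CharZero 𝕜] {k : ℕ}
    (A P : Matrix (Fin k) (Fin k) 𝕜) (lam : Fin k → 𝕜)
    (hP : IsUnit P.det) (hdiag : A = P * Matrix.diagonal lam * P⁻¹)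
    (hA : A.det ≠ 0)
    (c : Fin k → ℤ) (hc : c ≠ 0) (hdep : ∏ i, lam i ^ c i = 1) :
    ∀ α : Fin k → 𝕜, ∃ F : MvPolynomial (Fin k) 𝕜, F ≠ 0 ∧
      ∀ n : ℕ, MvPolynomial.eval ((A ^ n).mulVec α) F = 0 := by
  intro α
  -- eigenvalues are nonzero
  have hPiP : P⁻¹ * P = 1 := Matrix.nonsing_inv_mul P hP
  have hPPi : P * P⁻¹ = 1 := Matrix.mul_nonsing_inv P hP
  have hlam : ∀ i, lam i ≠ 0 := by
    intro i hi
    apply hA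
    rw [hdiag, Matrix.det_mul, Matrix.det_mul, Matrix.det_diagonal]
    rw [Finset.prod_eq_zero (Finset.mem_univ i) hi]
    ring
  -- the key matrix identity
  have hkey : ∀ n : ℕ, P⁻¹ * A ^ n = Matrix.diagonal (lam ^ n) * P⁻¹ := by
    intro n
    induction n with
    | zero =>
      have h1 : Matrix.diagonal ((1 : Fin k → 𝕜)) = (1 : Matrix (Fin k) (Fin k) 𝕜) :=
        Matrix.diagonal_one
      rw [pow_zero, pow_zero, mul_one, h1, one_mul]
    | succ n ih =>
      rw [pow_succ, ← mul_assoc, ih, hdiag]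
      have hassoc : Matrix.diagonal (lam ^ n) * P⁻¹ * (P * Matrix.diagonal lam * P⁻¹)
          = Matrix.diagonal (lam ^ n) * (P⁻¹ * P) * (Matrix.diagonal lam * P⁻¹) := by
        simp only [mul_assoc]
      have hdd : (fun i => (lam ^ n) i * lam i) = lam ^ (n + 1) := by
        funext i; simp [pow_succ]
      rw [hassoc, hPiP, mul_one, ← mul_assoc, Matrix.diagonal_mul_diagonal, hdd]
  set β : Fin k → 𝕜 := P⁻¹.mulVec α with hβ
  -- the orbit in eigencoordinates
  have horb : ∀ n : ℕ, P⁻¹.mulVec ((A ^ n).mulVec α) = fun i => lam i ^ n * β i := by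
    intro n
    funext i
    rw [Matrix.mulVec_mulVec, hkey n, ← Matrix.mulVec_mulVec, ← hβ,
      Matrix.mulVec_diagonal]
    simp
  -- the linear substitution
  set g : Fin k → MvPolynomial (Fin k) 𝕜 := fun i => ∑ j, C (P⁻¹ i j) * X j with hg
  have hgev : ∀ (x : Fin k → 𝕜) (i : Fin k), eval x (g i) = P⁻¹.mulVec x i := by
    intro x i
    simp [hg, Matrix.mulVec, dotProduct]
  by_cases hzero : ∃ i, c i ≠ 0 ∧ β i = 0
  · -- some eigencoordinate of α vanishes: use a linear form
    obtain ⟨i, hci, hbi⟩ := hzero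
    refine ⟨g i, ?_, ?_⟩
    · -- g i ≠ 0 since row i of P⁻¹ is nonzero
      intro h0
      have hrow : ∃ j, P⁻¹ i j ≠ 0 := by
        by_contra hall
        push_neg at hall
        have : (P⁻¹).det = 0 := Matrix.det_eq_zero_of_row_eq_zero i hall
        have hu : IsUnit (P⁻¹).det := Matrix.isUnit_nonsing_inv_det P hP
        rw [this] at hu
        exact hu.ne_zero rfl
      obtain ⟨j, hj⟩ := hrow
      have := hgev (Pi.single j 1) i
      rw [h0] at this
      simp [Matrix.mulVec, dotProduct, Pi.single_apply] at this
      exact hj this.symm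
    · intro n
      rw [hgev, horb n]
      show lam i ^ n * β i = 0
      rw [hbi, mul_zero]
  · push_neg at hzero
    -- all relevant eigencoordinates nonzero
    have hβne : ∀ i, c i ≠ 0 → β i ≠ 0 := hzero
    -- exponents
    set mp : Fin k →₀ ℕ := Finsupp.equivFunOnFinite.symm (fun i => (c i).toNat) with hmp
    set mm : Fin k →₀ ℕ := Finsupp.equivFunOnFinite.symm (fun i => (-c i).toNat) with hmm
    have hmpa : ∀ i, mp i = (c i).toNat := fun i => rfl
    have hmma : ∀ i, mm i = (-c i).toNat := fun i => rfl
    set bp : 𝕜 := ∏ i, β i ^ (c i).toNat with hbp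
    set bm : 𝕜 := ∏ i, β i ^ (-c i).toNat with hbm
    have hbpne : bp ≠ 0 := by
      rw [hbp]
      apply Finset.prod_ne_zero_iff.2
      intro i _
      rcases eq_or_ne (c i) 0 with h | h
      · simp [h]
      · exact pow_ne_zero _ (hβne i h)
    have hbmne : bm ≠ 0 := by
      rw [hbm]
      apply Finset.prod_ne_zero_iff.2
      intro i _
      rcases eq_or_ne (c i) 0 with h | h
      · simp [h]
      · exact pow_ne_zero _ (hβne i h)
    -- eigenvalue relation in ℕ-powers
    have hrel : ∏ i, lam i ^ (c i).toNat = ∏ i, lam i ^ (-c i).toNat := by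
      have h1 : ∀ i, lam i ^ c i = lam i ^ (c i).toNat * (lam i ^ (-c i).toNat)⁻¹ := by
        intro i
        rw [← zpow_natCast (lam i) (c i).toNat, ← zpow_natCast (lam i) (-c i).toNat,
          ← zpow_neg, ← zpow_add₀ (hlam i)]
        congr 1
        omega
      have h2 : (∏ i, lam i ^ (c i).toNat) * (∏ i, lam i ^ (-c i).toNat)⁻¹ = 1 := by
        rw [← Finset.prod_inv_distrib, ← Finset.prod_mul_distrib]
        rw [← hdep]
        exact Finset.prod_congr rfl (fun i _ => (h1 i).symm)
      have h3 : (∏ i, lam i ^ (-c i).toNat) ≠ 0 :=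
        Finset.prod_ne_zero_iff.2 (fun i _ => pow_ne_zero _ (hlam i))
      field_simp at h2
      exact h2
    -- the polynomial G in eigencoordinates
    set G : MvPolynomial (Fin k) 𝕜 := monomial mp bm - monomial mm bp with hG
    have hmne : mp ≠ mm := by
      obtain ⟨i, hi⟩ := Function.ne_iff.1 hc
      intro h
      have h2 : mp i = mm i := DFunLike.congr_fun h i
      rw [hmpa i, hmma i] at h2
      simp only [Pi.zero_apply] at hi
      omega
    have hGne : G ≠ 0 := by
      intro h0
      have : coeff mp G = 0 := by rw [h0]; simp
      rw [hG, coeff_sub, coeff_monomial, coeff_monomial, if_pos rfl, if_neg (Ne.symm hmne)] at this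
      simp at this
      exact hbmne this
    have hGeval : ∀ y : Fin k → 𝕜, eval y G = bm * ∏ i, y i ^ (c i).toNat
        - bp * ∏ i, y i ^ (-c i).toNat := by
      intro y
      rw [hG, map_sub, eval_monomial, eval_monomial]
      congr 1
      · congr 1
        rw [Finsupp.prod]
        rw [Finset.prod_subset (Finset.subset_univ mp.support)]
        · exact Finset.prod_congr rfl (fun i _ => by rw [hmpa])
        · intro i _ hi
          rw [Finsupp.notMem_support_iff] at hi
          rw [hi, pow_zero]
      · congr 1
        rw [Finsupp.prod]
        rw [Finset.prod_subset (Finset.subset_univ mm.support)]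
        · exact Finset.prod_congr rfl (fun i _ => by rw [hmma])
        · intro i _ hi
          rw [Finsupp.notMem_support_iff] at hi
          rw [hi, pow_zero]
    -- G vanishes along the eigencoordinate orbit
    have hGorb : ∀ n : ℕ, eval (fun i => lam i ^ n * β i) G = 0 := by
      intro n
      rw [hGeval]
      have e1 : ∏ i, (lam i ^ n * β i) ^ (c i).toNat
          = (∏ i, lam i ^ (c i).toNat) ^ n * bp := by
        rw [hbp, ← Finset.prod_pow, ← Finset.prod_mul_distrib]
        exact Finset.prod_congr rfl (fun i _ => by rw [mul_pow, ← pow_mul, ← pow_mul, mul_comm n])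
      have e2 : ∏ i, (lam i ^ n * β i) ^ (-c i).toNat
          = (∏ i, lam i ^ (-c i).toNat) ^ n * bm := by
        rw [hbm, ← Finset.prod_pow, ← Finset.prod_mul_distrib]
        exact Finset.prod_congr rfl (fun i _ => by rw [mul_pow, ← pow_mul, ← pow_mul, mul_comm n])
      rw [e1, e2, hrel]
      ring
    -- pull back along the linear substitution
    refine ⟨bind₁ g G, ?_, ?_⟩
    · intro h0
      apply hGne
      apply MvPolynomial.funext
      intro y
      have : eval (P.mulVec y) (bind₁ g G) = 0 := by rw [h0]; simp
      rw [eval_bind₁'] at this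
      have hy : (fun i => eval (P.mulVec y) (g i)) = y := by
        funext i
        rw [hgev, Matrix.mulVec_mulVec, hPiP, Matrix.one_mulVec]
      rw [hy] at this
      rw [this]
      simp
    · intro n
      rw [eval_bind₁']
      have hy : (fun i => eval ((A ^ n).mulVec α) (g i)) = fun i => lam i ^ n * β i := by
        funext i
        rw [hgev]
        exact congrFun (horb n) i
      rw [hy]
      exact hGorb n
end
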